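/- Let the prior on α be Stirling-gamma SG(a, b, n) and suppose T conditionally independent partitions Π_{n,1}, …, Π_{n,T} of {1,…,n} are observed, each with Dirichlet-process partition likelihood proportional (in α) to α^{K_t}/∏_{r=0}^{n−1}(α+r), where K_t is the number of blocks of Π_{n,t}. Then the posterior of α is Stirling-gamma SG(a + ∑_{t=1}^{T} K_t, b + T, n). -/

import Mathlib

open MeasureTheory

/-- The unnormalized Stirling-gamma kernel of `SG(a, b, m)`. -/
noncomputable def sgKernel (a b : ℝ) (m : ℕ) (α : ℝ) : ℝ :=
  α ^ (a - 1) / (∏ r ∈ Finset.range m, (α + r)) ^ b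

/-- The Stirling-gamma `SG(a, b, m)` density. -/
noncomputable def sgPdf (a b : ℝ) (m : ℕ) (α : ℝ) : ℝ :=
  sgKernel a b m α / ∫ x in Set.Ioi (0:ℝ), sgKernel a b m x

/-- The `α`-dependent part of the Dirichlet-process partition likelihood for a partition
of `{1,…,n}` with `K` blocks. -/
noncomputable def dpPartitionLik (n K : ℕ) (α : ℝ) : ℝ :=
  α ^ (K : ℝ) / ∏ r ∈ Finset.range n, (α + r)

lemma prodP_pos {n : ℕ} {x : ℝ} (hx : 0 < x) :
    0 < ∏ r ∈ Finset.range n, (x + r) :=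
  Finset.prod_pos fun r _ => by positivity

lemma sgKernel_pos {n : ℕ} {a b x : ℝ} (hx : 0 < x) : 0 < sgKernel a b n x :=
  div_pos (Real.rpow_pos_of_pos hx _) (Real.rpow_pos_of_pos (prodP_pos hx) _)

lemma sgKernel_continuousOn (a b : ℝ) (n : ℕ) :
    ContinuousOn (sgKernel a b n) (Set.Ioi (0:ℝ)) := by
  have hP : Continuous fun x : ℝ => ∏ r ∈ Finset.range n, (x + r) :=
    continuous_finset_prod _ fun r _ => by continuity
  apply ContinuousOn.div
  · exact fun x hx =>
      (Real.continuousAt_rpow_const x _ (Or.inl (ne_of_gt hx))).continuousWithinAt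
  · exact hP.continuousOn.rpow_const fun x hx => Or.inl (ne_of_gt (prodP_pos hx))
  · exact fun x hx => ne_of_gt (Real.rpow_pos_of_pos (prodP_pos hx) _)

lemma sgKernel_integrableOn {n : ℕ} (hn : 1 ≤ n) {a b : ℝ} (hb : 0 < b)
    (hab1 : b < a) (habn : a < n * b) :
    IntegrableOn (sgKernel a b n) (Set.Ioi (0:ℝ)) := by
  obtain ⟨m, rfl⟩ : ∃ m, n = m + 1 := ⟨n - 1, (Nat.succ_pred_eq_of_pos hn).symm⟩
  set c : ℝ := ∏ i ∈ Finset.range m, ((i : ℝ) + 1) with hc_def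
  have hc : 0 < c := Finset.prod_pos fun i _ => by positivity
  have h1 : IntegrableOn (sgKernel a b (m + 1)) (Set.Ioc (0:ℝ) 1) := by
    have hg : IntegrableOn (fun x : ℝ => x ^ (a - 1 - b) / c ^ b) (Set.Ioc (0:ℝ) 1) := by
      rw [integrableOn_Ioc_iff_integrableOn_Ioo]
      exact ((intervalIntegral.integrableOn_Ioo_rpow_iff one_pos).2 (by linarith)).div_const _
    refine hg.mono' (((sgKernel_continuousOn a b (m + 1)).mono
      Set.Ioc_subset_Ioi_self).aestronglyMeasurable measurableSet_Ioc) ?_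
    filter_upwards [ae_restrict_mem measurableSet_Ioc] with x hx
    have hx0 : 0 < x := hx.1
    have hPge : x * c ≤ ∏ r ∈ Finset.range (m + 1), (x + r) := by
      rw [Finset.prod_range_succ']
      push_cast
      simp only [add_zero]
      rw [mul_comm x c]
      refine mul_le_mul_of_nonneg_right ?_ hx0.le
      refine Finset.prod_le_prod (fun i _ => by positivity) fun i _ => by push_cast; linarith
    have hrge : x ^ b * c ^ b ≤ (∏ r ∈ Finset.range (m + 1), (x + r)) ^ b := by
      rw [← Real.mul_rpow hx0.le hc.le]
      exact Real.rpow_le_rpow (by positivity) hPge hb.le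
    have hbound : sgKernel a b (m + 1) x ≤ x ^ (a - 1 - b) / c ^ b := by
      have h1 : sgKernel a b (m + 1) x ≤ x ^ (a - 1) / (x ^ b * c ^ b) :=
        div_le_div_of_nonneg_left (Real.rpow_nonneg hx0.le _) (by positivity) hrge
      calc sgKernel a b (m + 1) x ≤ x ^ (a - 1) / (x ^ b * c ^ b) := h1
        _ = x ^ (a - 1 - b) / c ^ b := by
            rw [← div_div, ← Real.rpow_sub hx0]
    rw [Real.norm_eq_abs, abs_of_nonneg (sgKernel_pos hx0).le]
    exact hbound
  have h2 : IntegrableOn (sgKernel a b (m + 1)) (Set.Ioi (1:ℝ)) := by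
    have hg : IntegrableOn (fun x : ℝ => x ^ (a - 1 - (m + 1) * b)) (Set.Ioi (1:ℝ)) := by
      refine (integrableOn_Ioi_rpow_iff one_pos).2 ?_
      push_cast at habn ⊢
      linarith
    refine hg.mono' (((sgKernel_continuousOn a b (m + 1)).mono
      (Set.Ioi_subset_Ioi zero_le_one)).aestronglyMeasurable measurableSet_Ioi) ?_
    filter_upwards [ae_restrict_mem measurableSet_Ioi] with x hx
    have hx0 : 0 < x := lt_trans one_pos hx
    have hPge : x ^ ((m + 1 : ℕ) : ℝ) ≤ ∏ r ∈ Finset.range (m + 1), (x + r) := by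
      rw [Real.rpow_natCast]
      calc x ^ (m + 1) = ∏ r ∈ Finset.range (m + 1), x := by
            rw [Finset.prod_const, Finset.card_range]
        _ ≤ ∏ r ∈ Finset.range (m + 1), (x + r) :=
            Finset.prod_le_prod (fun i _ => hx0.le) fun i _ => le_add_of_nonneg_right (by positivity)
    have hrge : x ^ (((m + 1 : ℕ) : ℝ) * b) ≤ (∏ r ∈ Finset.range (m + 1), (x + r)) ^ b := by
      rw [Real.rpow_mul hx0.le]
      exact Real.rpow_le_rpow (Real.rpow_nonneg hx0.le _) hPge hb.le
    have hbound : sgKernel a b (m + 1) x ≤ x ^ (a - 1 - (m + 1) * b) := by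
      have h1 : sgKernel a b (m + 1) x ≤ x ^ (a - 1) / x ^ (((m + 1 : ℕ) : ℝ) * b) :=
        div_le_div_of_nonneg_left (Real.rpow_nonneg hx0.le _) (by positivity) hrge
      calc sgKernel a b (m + 1) x ≤ x ^ (a - 1) / x ^ (((m + 1 : ℕ) : ℝ) * b) := h1
        _ = x ^ (a - 1 - (m + 1) * b) := by
            rw [← Real.rpow_sub hx0]; push_cast; ring_nf
    rw [Real.norm_eq_abs, abs_of_nonneg (sgKernel_pos hx0).le]
    exact hbound
  have := h1.union h2
  rwa [Set.Ioc_union_Ioi_eq_Ioi (zero_le_one)] at this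

lemma sgKernel_integral_pos {n : ℕ} (hn : 1 ≤ n) {a b : ℝ} (hb : 0 < b)
    (hab1 : b < a) (habn : a < n * b) :
    0 < ∫ x in Set.Ioi (0:ℝ), sgKernel a b n x := by
  have hint := sgKernel_integrableOn hn hb hab1 habn
  have hnonneg : 0 ≤ᵐ[volume.restrict (Set.Ioi (0:ℝ))] sgKernel a b n := by
    filter_upwards [ae_restrict_mem measurableSet_Ioi] with x hx
    exact (sgKernel_pos hx).le
  rw [setIntegral_pos_iff_support_of_nonneg_ae hnonneg hint]
  have hsub : Set.Ioi (0:ℝ) ⊆ Function.support (sgKernel a b n) ∩ Set.Ioi 0 :=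
    fun x hx => ⟨ne_of_gt (sgKernel_pos hx), hx⟩
  calc (0 : ENNReal) < volume (Set.Ioi (0:ℝ)) := by simp [Real.volume_Ioi]
    _ ≤ _ := measure_mono hsub

lemma sgKernel_mul_lik (n T : ℕ) (K : ℕ → ℕ) (a b : ℝ) {x : ℝ} (hx : 0 < x) :
    sgKernel a b n x * ∏ t ∈ Finset.range T, dpPartitionLik n (K t) x =
      sgKernel (a + ∑ t ∈ Finset.range T, K t) (b + T) n x := by
  have hP : 0 < ∏ r ∈ Finset.range n, (x + r) := prodP_pos hx
  simp only [sgKernel, dpPartitionLik, Finset.prod_div_distrib, Finset.prod_const,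
    Finset.card_range]
  rw [div_mul_div_comm]
  congr 1
  · have h1 : ∏ t ∈ Finset.range T, x ^ ((K t : ℕ) : ℝ) =
        x ^ ((∑ t ∈ Finset.range T, K t : ℕ) : ℝ) := by
      simp only [Real.rpow_natCast]
      exact Finset.prod_pow_eq_pow_sum _ _ _
    rw [h1, ← Real.rpow_add hx]
    ring_nf
  · rw [← Real.rpow_natCast (∏ r ∈ Finset.range n, (x + r)) T, ← Real.rpow_add hP]

lemma div_div_div_same {x y c : ℝ} (hc : c ≠ 0) : (x / c) / (y / c) = x / y := by
  rcases eq_or_ne y 0 with h | h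
  · simp [h]
  · field_simp

/-- Full conditional of `α` under the AR-LB-SG process: with prior `SG(a, b, n)` and `T`
conditionally independent partitions of `{1,…,n}` with `K_1, …, K_T` blocks (joint
likelihood the product of the individual partition likelihoods), the posterior of `α` is
`SG(a + ∑_t K_t, b + T, n)`. -/
theorem stirling_gamma_conjugacy_T_partitions
    (n T : ℕ) (hn : 1 ≤ n) (hT : 1 ≤ T) (K : ℕ → ℕ)
    (hK1 : ∀ t < T, 1 ≤ K t) (hKn : ∀ t < T, K t ≤ n)
    (a b : ℝ) (ha : 0 < a) (hb : 0 < b) (hab1 : 1 < a / b) (habn : a / b < n)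
    (α : ℝ) (hα : 0 < α) :
    (sgPdf a b n α * ∏ t ∈ Finset.range T, dpPartitionLik n (K t) α) /
        (∫ x in Set.Ioi (0:ℝ), sgPdf a b n x * ∏ t ∈ Finset.range T, dpPartitionLik n (K t) x) =
      sgPdf (a + ∑ t ∈ Finset.range T, K t) (b + T) n α := by
  have hba : b < a := by
    have := (one_lt_div hb).mp hab1; linarith
  have hanb : a < n * b := by
    have := (div_lt_iff₀ hb).mp habn; linarith
  have hC : 0 < ∫ x in Set.Ioi (0:ℝ), sgKernel a b n x :=
    sgKernel_integral_pos hn hb hba hanb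
  set C := ∫ x in Set.Ioi (0:ℝ), sgKernel a b n x with hCdef
  have hpt : ∀ x ∈ Set.Ioi (0:ℝ),
      sgPdf a b n x * ∏ t ∈ Finset.range T, dpPartitionLik n (K t) x =
        sgKernel (a + ∑ t ∈ Finset.range T, K t) (b + T) n x / C := by
    intro x hx
    rw [sgPdf, div_mul_eq_mul_div, sgKernel_mul_lik n T K a b hx]
  have hden : (∫ x in Set.Ioi (0:ℝ),
        sgPdf a b n x * ∏ t ∈ Finset.range T, dpPartitionLik n (K t) x) =
      (∫ x in Set.Ioi (0:ℝ), sgKernel (a + ∑ t ∈ Finset.range T, K t) (b + T) n x) / C := by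
    rw [setIntegral_congr_fun measurableSet_Ioi hpt, integral_div]
  rw [hden, hpt α hα, sgPdf]
  exact div_div_div_same (ne_of_gt hC)
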